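/- Let ψ_ν(t) = t^ν − t^{−ν} for ν > 0. For 0 < a < b and a ≤ s ≤ b, define f_{ν,s}(t) = ψ_ν(t/a)·ψ_ν(b/s)/ψ_ν(b/a) for a ≤ t ≤ s and f_{ν,s}(t) = ψ_ν(s/a)·ψ_ν(b/t)/ψ_ν(b/a) for s < t ≤ b. Then max_{t∈[a,b]} f_{ν,s}(t) = f_{ν,s}(s), and max_{s∈[a,b]} f_{ν,s}(s) = f_{ν,√(ab)}(√(ab)) = (1 − (a/b)^ν)/(1 + (a/b)^ν) ≤ 1. -/
import Mathlib


open Real Set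

theorem stmt_1 (ν a b : ℝ) (hν : 0 < ν) (ha : 0 < a) (hab : a < b)
    (ψ : ℝ → ℝ) (hψ : ∀ t > (0:ℝ), ψ t = t ^ ν - t ^ (-ν))
    (f : ℝ → ℝ → ℝ)
    (hf₁ : ∀ s ∈ Icc a b, ∀ t ∈ Icc a b, t ≤ s →
      f s t = ψ (t / a) * ψ (b / s) / ψ (b / a))
    (hf₂ : ∀ s ∈ Icc a b, ∀ t ∈ Icc a b, s < t →
      f s t = ψ (s / a) * ψ (b / t) / ψ (b / a)) :
    (∀ s ∈ Icc a b, ∀ t ∈ Icc a b, f s t ≤ f s s) ∧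
    (∀ s ∈ Icc a b, f s s ≤ f (Real.sqrt (a * b)) (Real.sqrt (a * b))) ∧
    f (Real.sqrt (a * b)) (Real.sqrt (a * b)) = (1 - (a / b) ^ ν) / (1 + (a / b) ^ ν) ∧
    (1 - (a / b) ^ ν) / (1 + (a / b) ^ ν) ≤ 1 := by
  have hb : 0 < b := ha.trans hab
  have hψd : ∀ u v : ℝ, 0 < u → 0 < v →
      ψ (u / v) = u ^ ν / v ^ ν - v ^ ν / u ^ ν := by
    intro u v hu hv
    rw [hψ _ (div_pos hu hv), Real.rpow_neg (div_pos hu hv).le,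
      Real.div_rpow hu.le hv.le, inv_div]
  have hA : (0:ℝ) < a ^ ν := Real.rpow_pos_of_pos ha ν
  have hB : (0:ℝ) < b ^ ν := Real.rpow_pos_of_pos hb ν
  have hAB : a ^ ν < b ^ ν := Real.rpow_lt_rpow ha.le hab hν
  set A := a ^ ν with hAdef
  set B := b ^ ν with hBdef
  have hD : 0 < B / A - A / B := by
    rw [sub_pos, div_lt_div_iff₀ hB hA]; nlinarith
  have hX : ∀ s ∈ Icc a b, A ≤ s ^ ν ∧ s ^ ν ≤ B ∧ 0 < s := by
    intro s hs
    have hs0 : 0 < s := lt_of_lt_of_le ha hs.1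
    exact ⟨Real.rpow_le_rpow ha.le hs.1 hν.le,
      Real.rpow_le_rpow hs0.le hs.2 hν.le, hs0⟩
  have mono1 : ∀ x y : ℝ, 0 < x → x ≤ y → x / A - A / x ≤ y / A - A / y := by
    intro x y hx hxy
    have hy : 0 < y := hx.trans_le hxy
    rw [div_sub_div _ _ hA.ne' hx.ne', div_sub_div _ _ hA.ne' hy.ne',
      div_le_div_iff₀ (by positivity) (by positivity)]
    nlinarith [mul_nonneg (mul_nonneg hA.le (sub_nonneg.2 hxy)) (by positivity : (0:ℝ) ≤ x * y + A * A)]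
  have mono2 : ∀ x y : ℝ, 0 < x → x ≤ y → B / y - y / B ≤ B / x - x / B := by
    intro x y hx hxy
    have hy : 0 < y := hx.trans_le hxy
    rw [div_sub_div _ _ hy.ne' hB.ne', div_sub_div _ _ hx.ne' hB.ne',
      div_le_div_iff₀ (by positivity) (by positivity)]
    nlinarith [mul_nonneg (mul_nonneg hB.le (sub_nonneg.2 hxy)) (by positivity : (0:ℝ) ≤ x * y + B * B)]
  have nn1 : ∀ x : ℝ, A ≤ x → 0 ≤ x / A - A / x := by
    intro x hx
    have hx0 : 0 < x := hA.trans_le hx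
    rw [sub_nonneg, div_le_div_iff₀ hx0 hA]
    nlinarith
  have nn2 : ∀ x : ℝ, 0 < x → x ≤ B → 0 ≤ B / x - x / B := by
    intro x hx0 hx
    rw [sub_nonneg, div_le_div_iff₀ hB hx0]
    nlinarith
  -- sqrt facts
  set m := Real.sqrt (a * b) with hmdef
  have hm0 : 0 < m := Real.sqrt_pos.mpr (mul_pos ha hb)
  have hmIcc : m ∈ Icc a b := by
    constructor
    · nlinarith [Real.sq_sqrt (mul_pos ha hb).le, Real.sqrt_nonneg (a * b), hmdef]
    · nlinarith [Real.sq_sqrt (mul_pos ha hb).le, Real.sqrt_nonneg (a * b), hmdef]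
  have hM2 : m ^ ν * m ^ ν = A * B := by
    rw [← Real.mul_rpow hm0.le hm0.le, Real.mul_self_sqrt (mul_pos ha hb).le,
      hAdef, hBdef, ← Real.mul_rpow ha.le hb.le]
  set M := m ^ ν with hMdef
  have hM : 0 < M := Real.rpow_pos_of_pos hm0 ν
  have hMval : (M / A - A / M) * (B / M - M / B) = (B - A) * (B - A) / (A * B) := by
    rw [div_sub_div _ _ hA.ne' hM.ne', div_sub_div _ _ hM.ne' hB.ne',
      div_mul_div_comm, div_eq_div_iff (by positivity) (by positivity)]
    linear_combination (A * B * (A * B - M * M)) * hM2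
  have hupper : ∀ x : ℝ, 0 < x →
      (x / A - A / x) * (B / x - x / B) ≤ (B - A) * (B - A) / (A * B) := by
    intro x hx0
    rw [div_sub_div _ _ hA.ne' hx0.ne', div_sub_div _ _ hx0.ne' hB.ne',
      div_mul_div_comm, div_le_div_iff₀ (by positivity) (by positivity)]
    nlinarith [mul_nonneg (mul_pos hA hB).le (sq_nonneg (x * x - A * B)), hx0.le, sq_nonneg x]
  refine ⟨?_, ?_, ?_, ?_⟩
  · intro s hs t ht
    obtain ⟨hsA, hsB, hs0⟩ := hX s hs
    obtain ⟨htA, htB, ht0⟩ := hX t ht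
    have hsν : 0 < s ^ ν := hA.trans_le hsA
    have htν : 0 < t ^ ν := hA.trans_le htA
    rcases le_or_gt t s with h | h
    · rw [hf₁ s hs t ht h, hf₁ s hs s hs le_rfl, hψd t a ht0 ha, hψd s a hs0 ha,
        hψd b s hb hs0, hψd b a hb ha]
      apply div_le_div_of_nonneg_right ?_ hD.le
      exact mul_le_mul_of_nonneg_right
        (mono1 _ _ htν (Real.rpow_le_rpow ht0.le h hν.le)) (nn2 _ hsν hsB)
    · rw [hf₂ s hs t ht h, hf₁ s hs s hs le_rfl, hψd s a hs0 ha, hψd b t hb ht0,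
        hψd b s hb hs0, hψd b a hb ha]
      apply div_le_div_of_nonneg_right ?_ hD.le
      exact mul_le_mul_of_nonneg_left
        (mono2 _ _ hsν (Real.rpow_le_rpow hs0.le h.le hν.le)) (nn1 _ hsA)
  · intro s hs
    obtain ⟨hsA, hsB, hs0⟩ := hX s hs
    have hsν : 0 < s ^ ν := hA.trans_le hsA
    rw [hf₁ s hs s hs le_rfl, hf₁ m hmIcc m hmIcc le_rfl, hψd s a hs0 ha,
      hψd b s hb hs0, hψd m a hm0 ha, hψd b m hb hm0, hψd b a hb ha]
    apply div_le_div_of_nonneg_right ?_ hD.le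
    rw [show m ^ ν = M from rfl, hMval]
    exact hupper _ hsν
  · rw [hf₁ m hmIcc m hmIcc le_rfl, hψd m a hm0 ha, hψd b m hb hm0, hψd b a hb ha,
      show m ^ ν = M from rfl, hMval]
    have hab' : (a / b) ^ ν = A / B := by
      rw [hAdef, hBdef, ← Real.div_rpow ha.le hb.le]
    rw [hab']
    rw [div_eq_div_iff (by positivity) (by positivity)]
    field_simp
    ring
  · have h0 : 0 ≤ (a / b) ^ ν := Real.rpow_nonneg (by positivity) ν
    rw [div_le_one (by positivity)]
    linarith
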